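/- For all integers m ≥ 1 and 1 ≤ l ≤ m, one has Σ_{k=m−l+1}^{m+1} C(2m−k+1, m) · C(k−1, m−l+1) = C(2m+1, l−1), where C(p,q) denotes the binomial coefficient (with C(p,q) = 0 when q > p). -/
import Mathlib

/-- Vandermonde-type identity with varying tops:
`∑_{j=0}^{n} C(r+j, j) C(s+n-j, n-j) = C(r+s+n+1, n)`. -/
lemma aux_vandermonde (r s : ℕ) : ∀ n, ∑ j ∈ Finset.range (n + 1),
    (r + j).choose j * (s + (n - j)).choose (n - j) = (r + s + n + 1).choose n := by
  induction r with
  | zero =>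
    intro n
    have h1 : ∀ j ∈ Finset.range (n + 1),
        (0 + j).choose j * (s + (n - j)).choose (n - j)
          = (fun t => (s + t).choose t) (n + 1 - 1 - j) := by
      intro j hj
      simp [Nat.choose_self]
    rw [Finset.sum_congr rfl h1, Finset.sum_range_reflect (fun t => (s + t).choose t) (n + 1)]
    have h2 : ∀ j ∈ Finset.range (n + 1), (s + j).choose j = (s + j).choose s := by
      intro j hj
      have := Nat.choose_symm (n := s + j) (k := s) (Nat.le_add_right s j)
      simpa using this
    rw [Finset.sum_congr rfl h2]
    have h3 : ∑ i ∈ Finset.Icc s (s + n), i.choose s = (s + n + 1).choose (s + 1) :=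
      Nat.sum_Icc_choose (s + n) s
    rw [← Finset.Ico_add_one_right_eq_Icc, Finset.sum_Ico_eq_sum_range] at h3
    have h4 : (s + n + 1) - (s + 1) = n := by omega
    have h5 := Nat.choose_symm (n := s + n + 1) (k := s + 1) (by omega)
    rw [h4] at h5
    have h6 : s + n + 1 - s = n + 1 := by omega
    rw [h6] at h3
    rw [h3, ← h5]
    have h7 : 0 + s + n + 1 = s + n + 1 := by ring
    rw [h7]
  | succ r ih =>
    intro n
    induction n with
    | zero => simp
    | succ n ihn =>
      rw [Finset.sum_range_succ']
      have hsplit : ∀ j ∈ Finset.range (n + 1),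
          (r + 1 + (j + 1)).choose (j + 1) * (s + (n + 1 - (j + 1))).choose (n + 1 - (j + 1))
            = (r + 1 + j).choose j * (s + (n - j)).choose (n - j)
              + (r + (j + 1)).choose (j + 1) * (s + (n - j)).choose (n - j) := by
        intro j hj
        have e1 : r + 1 + (j + 1) = (r + 1 + j) + 1 := by ring
        have e2 : n + 1 - (j + 1) = n - j := by omega
        rw [e1, e2, Nat.choose_succ_succ', add_mul]
        congr 3
        omega
      rw [Finset.sum_congr rfl hsplit, Finset.sum_add_distrib]
      have h2 := ih (n + 1)
      rw [Finset.sum_range_succ'] at h2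
      have key : ∑ j ∈ Finset.range (n + 1),
            (r + (j + 1)).choose (j + 1) * (s + (n - j)).choose (n - j)
          + (r + 1 + 0).choose 0 * (s + (n + 1 - 0)).choose (n + 1 - 0)
          = (r + s + n + 2).choose (n + 1) := by
        have e0 : (r + 1 + 0).choose 0 * (s + (n + 1 - 0)).choose (n + 1 - 0)
            = (r + 0).choose 0 * (s + (n + 1 - 0)).choose (n + 1 - 0) := by simp
        rw [e0]
        have hc : ∀ j ∈ Finset.range (n + 1),
            (r + (j + 1)).choose (j + 1) * (s + (n - j)).choose (n - j)
              = (r + (j + 1)).choose (j + 1)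
                  * (s + (n + 1 - (j + 1))).choose (n + 1 - (j + 1)) := by
          intro j hj
          congr 2 <;> omega
        rw [Finset.sum_congr rfl hc, h2]
        congr 1
      rw [add_assoc, key, ihn]
      have e1 : r + 1 + s + (n + 1) + 1 = (r + s + n + 2) + 1 := by ring
      have e2 : r + 1 + s + n + 1 = r + s + n + 2 := by ring
      rw [e1, e2]
      exact (Nat.choose_succ_succ _ _).symm

lemma key_lemma (c d : ℕ) :
    ∑ k ∈ Finset.Icc (d + 1) (c + d + 2),
        (2 * c + 2 * d + 3 - k).choose (c + d + 1) * (k - 1).choose (d + 1)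
      = (2 * c + 2 * d + 3).choose c := by
  have hIcc : Finset.Icc (d + 1) (c + d + 2) = Finset.Ico (d + 1) (c + d + 3) :=
    (Finset.Ico_add_one_right_eq_Icc (d + 1) (c + d + 2)).symm
  rw [hIcc, Finset.sum_Ico_eq_sum_range]
  have hrange : c + d + 3 - (d + 1) = c + 2 := by omega
  rw [hrange, Finset.sum_range_succ']
  have hzero : (2 * c + 2 * d + 3 - (d + 1 + 0)).choose (c + d + 1)
      * ((d + 1 + 0) - 1).choose (d + 1) = 0 := by
    have h : d < d + 1 := Nat.lt_succ_self d
    simp [Nat.choose_eq_zero_of_lt h]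
  rw [hzero, add_zero]
  have haux := aux_vandermonde (c + d + 1) (d + 1) c
  have hrefl := Finset.sum_range_reflect
    (fun j => (c + d + 1 + j).choose j * (d + 1 + (c - j)).choose (c - j)) (c + 1)
  rw [← hrefl] at haux
  have hcongr : ∀ i ∈ Finset.range (c + 1),
      (2 * c + 2 * d + 3 - (d + 1 + (i + 1))).choose (c + d + 1)
          * ((d + 1 + (i + 1)) - 1).choose (d + 1)
        = (c + d + 1 + (c + 1 - 1 - i)).choose (c + 1 - 1 - i)
            * (d + 1 + (c - (c + 1 - 1 - i))).choose (c - (c + 1 - 1 - i)) := by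
    intro i hi
    rw [Finset.mem_range] at hi
    have hi' : i ≤ c := by omega
    have e1 : 2 * c + 2 * d + 3 - (d + 1 + (i + 1)) = c + d + 1 + (c + 1 - 1 - i) := by omega
    have e2 : (d + 1 + (i + 1)) - 1 = d + 1 + (c - (c + 1 - 1 - i)) := by omega
    rw [e1, e2]
    have s1 : (c + d + 1 + (c + 1 - 1 - i)).choose (c + d + 1)
        = (c + d + 1 + (c + 1 - 1 - i)).choose (c + 1 - 1 - i) := by
      have := Nat.choose_symm (n := c + d + 1 + (c + 1 - 1 - i)) (k := c + d + 1)
        (Nat.le_add_right _ _)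
      rw [Nat.add_sub_cancel_left] at this
      exact this.symm
    have s2 : (d + 1 + (c - (c + 1 - 1 - i))).choose (d + 1)
        = (d + 1 + (c - (c + 1 - 1 - i))).choose (c - (c + 1 - 1 - i)) := by
      have := Nat.choose_symm (n := d + 1 + (c - (c + 1 - 1 - i))) (k := d + 1)
        (Nat.le_add_right _ _)
      rw [Nat.add_sub_cancel_left] at this
      exact this.symm
    rw [s1, s2]
  rw [Finset.sum_congr rfl hcongr]
  rw [haux]
  congr 1
  omega

/-- `∑_{k=m-l+1}^{m+1} C(2m-k+1, m) C(k-1, m-l+1) = C(2m+1, l-1)`. -/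
theorem binomial_identity_four (m l : ℕ) (hm : 1 ≤ m) (hl1 : 1 ≤ l) (hl2 : l ≤ m) :
    ∑ k ∈ Finset.Icc (m - l + 1) (m + 1),
        (2 * m - k + 1).choose m * (k - 1).choose (m - l + 1) = (2 * m + 1).choose (l - 1) := by
  obtain ⟨d, hd⟩ := Nat.exists_eq_add_of_le hl2
  obtain ⟨c, hc⟩ := Nat.exists_eq_add_of_le hl1
  have h1 : m - l + 1 = d + 1 := by omega
  have h2 : m + 1 = c + d + 2 := by omega
  have h3 : 2 * m + 1 = 2 * c + 2 * d + 3 := by omega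
  have h4 : l - 1 = c := by omega
  rw [h1, h2, h3, h4, ← key_lemma c d]
  apply Finset.sum_congr rfl
  intro k hk
  rw [Finset.mem_Icc] at hk
  have e1 : 2 * m - k + 1 = 2 * c + 2 * d + 3 - k := by omega
  have e2 : m = c + d + 1 := by omega
  rw [e1, e2]
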